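/- A left-linear term rewriting system that is the union of two confluent left- and right-linear TRSs with no critical pairs between a rule of one and a rule of the other is confluent. -/

import Mathlib

/-- Ground first-order terms over a signature `F`. -/
inductive GTerm (F : Type) : Type
  | node : F → List (GTerm F) → GTerm F

/-- First-order terms over symbols `F` and variables `V`. -/
inductive Tm (F : Type) (V : Type) : Type
  | var : V → Tm F V
  | node : F → List (Tm F V) → Tm F V

/-- Application of a ground substitution to a term. -/
def substG {F V : Type} (σ : V → GTerm F) : Tm F V → GTerm F
  | .var v => σ v
  | .node f ts => .node f (ts.attach.map (fun t => substG σ t.1))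
termination_by t => sizeOf t
decreasing_by
  have := List.sizeOf_lt_of_mem t.2
  simp only [Tm.node.sizeOf_spec]
  omega

/-- Application of a (term-valued) substitution to a term. -/
def substT {F V : Type} (σ : V → Tm F V) : Tm F V → Tm F V
  | .var v => σ v
  | .node f ts => .node f (ts.attach.map (fun t => substT σ t.1))
termination_by t => sizeOf t
decreasing_by
  have := List.sizeOf_lt_of_mem t.2
  simp only [Tm.node.sizeOf_spec]
  omega

/-- The list of occurrences of variables in a term (with multiplicities). -/
def varOccs {F V : Type} : Tm F V → List V
  | .var v => [v]
  | .node _ ts => ts.attach.foldr (fun t acc => varOccs t.1 ++ acc) []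
termination_by t => sizeOf t
decreasing_by
  have := List.sizeOf_lt_of_mem t.2
  simp only [Tm.node.sizeOf_spec]
  omega

/-- Well-formedness of a rewrite rule: `vars r ⊆ vars l`. -/
def RuleWF {F V : Type} (p : Tm F V × Tm F V) : Prop :=
  ∀ v, v ∈ varOccs p.2 → v ∈ varOccs p.1

/-- A term is linear if every variable occurs in it at most once. -/
def LinearTm {F V : Type} (t : Tm F V) : Prop := (varOccs t).Nodup

/-- A rule is linear if both its left- and right-hand sides are linear. -/
def LinearRule {F V : Type} (p : Tm F V × Tm F V) : Prop :=
  LinearTm p.1 ∧ LinearTm p.2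

/-- Subterm relation on terms. -/
inductive Subterm {F V : Type} : Tm F V → Tm F V → Prop
  | refl {t} : Subterm t t
  | child {f : F} {ts : List (Tm F V)} {t u} : t ∈ ts → Subterm u t →
      Subterm u (.node f ts)

/-- `Overlap R₁ R₂` : some rule of `R₁` overlaps with some rule of `R₂`, i.e.
a non-variable subterm of the left-hand side of a rule of `R₁` is unifiable
(after renaming the rules apart, which is accounted for by using two
independent substitutions) with the left-hand side of a rule of `R₂`;
this is the existence of a critical pair between the two systems. -/
def Overlap {F V : Type} (R₁ R₂ : Set (Tm F V × Tm F V)) : Prop :=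
  ∃ p₁ ∈ R₁, ∃ p₂ ∈ R₂, ∃ u : Tm F V,
    Subterm u p₁.1 ∧ (∀ v : V, u ≠ .var v) ∧
    ∃ σ₁ σ₂ : V → Tm F V, substT σ₁ u = substT σ₂ p₂.1

/-- One-step rewriting of ground terms with the TRS `R`. -/
inductive Red {F V : Type} (R : Set (Tm F V × Tm F V)) :
    GTerm F → GTerm F → Prop
  | root {l r : Tm F V} (σ : V → GTerm F) : (l, r) ∈ R →
      Red R (substG σ l) (substG σ r)
  | sub {f : F} {pre post : List (GTerm F)} {t t'} : Red R t t' →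
      Red R (.node f (pre ++ t :: post)) (.node f (pre ++ t' :: post))

/-- Many-step rewriting. -/
def Reds {F V : Type} (R : Set (Tm F V × Tm F V)) : GTerm F → GTerm F → Prop :=
  Relation.ReflTransGen (Red R)

/-- Confluence of a TRS (on ground terms). -/
def Confluent {F V : Type} (R : Set (Tm F V × Tm F V)) : Prop :=
  ∀ a b c : GTerm F, Reds R a b → Reds R a c → ∃ d, Reds R b d ∧ Reds R c d

section Lemmas
variable {F V : Type}

theorem foldr_attach_flat {α β : Type*} (l : List α) (g : α → List β) :
    l.attach.foldr (fun t acc => g t.1 ++ acc) [] = l.flatMap g := by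
  induction l with
  | nil => simp
  | cons a l ih => simp [List.attach_cons, List.foldr_map, ← ih]

theorem substG_node (σ : V → GTerm F) (f : F) (ts : List (Tm F V)) :
    substG σ (.node f ts) = .node f (ts.map (substG σ)) := by
  rw [substG]; simp [List.map_attach_eq_pmap]

theorem substT_node (σ : V → Tm F V) (f : F) (ts : List (Tm F V)) :
    substT σ (.node f ts) = .node f (ts.map (substT σ)) := by
  rw [substT]; simp [List.map_attach_eq_pmap]

theorem varOccs_node (f : F) (ts : List (Tm F V)) :
    varOccs (.node f ts) = ts.flatMap varOccs := by
  rw [varOccs, foldr_attach_flat]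
end Lemmas
section Lemmas2
variable {F V : Type}

/-- Embedding of ground terms into terms. -/
def embedG : GTerm F → Tm F V
  | .node f ts => .node f (ts.attach.map (fun t => embedG t.1))
termination_by t => sizeOf t
decreasing_by
  have := List.sizeOf_lt_of_mem t.2
  simp only [GTerm.node.sizeOf_spec]
  omega

theorem embedG_node (f : F) (ts : List (GTerm F)) :
    (embedG (.node f ts) : Tm F V) = .node f (ts.map embedG) := by
  rw [embedG]; simp [List.map_attach_eq_pmap]

theorem embedG_substG (σ : V → GTerm F) : ∀ t : Tm F V,
    (embedG (substG σ t) : Tm F V) = substT (fun v => embedG (σ v)) t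
  | .var v => by rw [substG, substT]
  | .node f ts => by
    rw [substG_node, substT_node, embedG_node, List.map_map]
    congr 1
    exact List.map_congr_left (fun a ha => embedG_substG σ a)
termination_by t => sizeOf t
decreasing_by
  have := List.sizeOf_lt_of_mem ha
  simp only [Tm.node.sizeOf_spec]
  omega

theorem substG_congr {σ τ : V → GTerm F} : ∀ t : Tm F V,
    (∀ x ∈ varOccs t, σ x = τ x) → substG σ t = substG τ t
  | .var v, h => by rw [substG, substG]; exact h v (by rw [varOccs]; simp)
  | .node f ts, h => by
    rw [substG_node, substG_node]
    congr 1
    refine List.map_congr_left (fun a ha => substG_congr a (fun x hx => h x ?_))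
    rw [varOccs_node]
    exact List.mem_flatMap.2 ⟨a, ha, hx⟩
termination_by t => sizeOf t
decreasing_by
  have := List.sizeOf_lt_of_mem ha
  simp only [Tm.node.sizeOf_spec]
  omega
end Lemmas2
section Lemmas3
variable {F V : Type}

theorem ctx_step [DecidableEq V] {B : Set (Tm F V × Tm F V)} {σ σ' : V → GTerm F} {x : V}
    (hs : Red B (σ x) (σ' x)) (ho : ∀ y, y ≠ x → σ' y = σ y) :
    ∀ t : Tm F V, (varOccs t).count x ≤ 1 →
      substG σ' t = substG σ t ∨ Red B (substG σ t) (substG σ' t)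
  | .var v, _ => by
    by_cases hv : v = x
    · subst hv; right; rw [substG, substG]; exact hs
    · left; rw [substG, substG]; exact ho v hv
  | .node f ts, hc => by
    by_cases hx : x ∈ varOccs (Tm.node f ts)
    · rw [varOccs_node] at hx hc
      obtain ⟨a, ha, hxa⟩ := List.mem_flatMap.1 hx
      obtain ⟨p, q, hts⟩ := List.append_of_mem ha
      rw [hts] at hc
      have hcnt : (p.flatMap varOccs).count x + ((varOccs a).count x
          + (q.flatMap varOccs).count x) ≤ 1 := by
        simpa [List.count_append] using hc
      have h1 := List.one_le_count_iff.2 hxa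
      have hxp : x ∉ p.flatMap varOccs := by
        rw [← List.count_eq_zero]; omega
      have hxq : x ∉ q.flatMap varOccs := by
        rw [← List.count_eq_zero]; omega
      have hagree : ∀ b, b ∈ p ∨ b ∈ q → substG σ' b = substG σ b := by
        intro b hb
        refine substG_congr b (fun y hy => ho y (fun hyx => ?_))
        subst hyx
        rcases hb with hb | hb
        · exact hxp (List.mem_flatMap.2 ⟨b, hb, hy⟩)
        · exact hxq (List.mem_flatMap.2 ⟨b, hb, hy⟩)
      have hca : (varOccs a).count x ≤ 1 := by omega
      rcases ctx_step hs ho a hca with heq | hred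
      · left
        rw [substG_node, substG_node, hts]
        congr 1
        refine List.map_congr_left (fun b hb => ?_)
        rcases List.mem_append.1 hb with hb' | hb'
        · exact hagree b (Or.inl hb')
        · rcases List.mem_cons.1 hb' with hb'' | hb''
          · subst hb''; exact heq
          · exact hagree b (Or.inr hb'')
      · right
        rw [substG_node, substG_node, hts]
        simp only [List.map_append, List.map_cons]
        rw [List.map_congr_left (fun b hb => hagree b (Or.inl hb)),
          List.map_congr_left (fun b hb => hagree b (Or.inr hb))]
        exact Red.sub hred
    · left
      refine substG_congr _ (fun y hy => ho y (fun hyx => hx (hyx ▸ hy)))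
termination_by t => sizeOf t
decreasing_by
  have := List.sizeOf_lt_of_mem ha
  simp only [Tm.node.sizeOf_spec]
  omega
end Lemmas3
section Lemmas4
variable {F V : Type}

/-- A non-variable subterm of `l` is unifiable with the lhs of a rule of `B`. -/
def OverlapWith (l : Tm F V) (B : Set (Tm F V × Tm F V)) : Prop :=
  ∃ u : Tm F V, Subterm u l ∧ (∀ v, u ≠ .var v) ∧
    ∃ p₂ ∈ B, ∃ σ₁ σ₂ : V → Tm F V, substT σ₁ u = substT σ₂ p₂.1

theorem peel [DecidableEq V] {B : Set (Tm F V × Tm F V)} :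
    ∀ (l : Tm F V) (σ : V → GTerm F) (t' : GTerm F),
    LinearTm l → Red B (substG σ l) t' →
    OverlapWith l B ∨
    ∃ (x : V) (s' : GTerm F) (σ' : V → GTerm F), x ∈ varOccs l ∧ Red B (σ x) s' ∧
      σ' x = s' ∧ (∀ y, y ≠ x → σ' y = σ y) ∧ t' = substG σ' l
  | .var v, σ, t', _, h => by
    right
    refine ⟨v, t', Function.update σ v t', by rw [varOccs]; simp, ?_, ?_, ?_, ?_⟩
    · rw [substG] at h; exact h
    · simp
    · intro y hy; simp [Function.update_of_ne hy]
    · rw [substG]; simp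
  | .node f ts, σ, t', hlin, h => by
    rw [substG_node] at h
    generalize hg : GTerm.node f (List.map (substG σ) ts) = g at h
    cases h with
    | root τ hmem =>
      rename_i l₂ r₂
      left
      refine ⟨.node f ts, Subterm.refl, (by intro v hv; cases hv),
        (l₂, r₂), hmem, fun v => embedG (σ v), fun v => embedG (τ v), ?_⟩
      rw [← embedG_substG, ← embedG_substG, substG_node, hg]
    | sub hred =>
      rename_i f' pre post s s0
      injection hg with hf hl
      subst hf
      obtain ⟨p, l₂, hts, hp, hl₂⟩ := List.map_eq_append_iff.1 hl
      obtain ⟨a, q, hl₂', ha, hq⟩ := List.map_eq_cons_iff.1 hl₂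
      subst hl₂'
      have hats : a ∈ ts := by rw [hts]; exact List.mem_append.2 (Or.inr (List.mem_cons_self (a := a) (l := q)))
      -- linearity bookkeeping
      have hocc : varOccs (Tm.node f ts) = p.flatMap varOccs ++ (varOccs a ++ q.flatMap varOccs) := by
        rw [varOccs_node, hts]; simp
      have hnodup : (p.flatMap varOccs ++ (varOccs a ++ q.flatMap varOccs)).Nodup := by
        rw [← hocc]; exact hlin
      have hlina : LinearTm a :=
        ((List.Nodup.of_append_right hnodup).of_append_left)
      rcases peel a σ s0 hlina (ha ▸ hred) with hov | ⟨x, s', σ', hx, hredx, hσ'x, hσ'y, hs0⟩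
      · left
        obtain ⟨u, hu, hnv, rest⟩ := hov
        exact ⟨u, Subterm.child hats hu, hnv, rest⟩
      · right
        refine ⟨x, s', σ', by rw [hocc]; simp [hx], hredx, hσ'x, hσ'y, ?_⟩
        have hxp : x ∉ p.flatMap varOccs := by
          have := (List.nodup_append.1 hnodup).2.2
          exact fun hc => this x hc x (List.mem_append.2 (Or.inl hx)) rfl
        have hxq : x ∉ q.flatMap varOccs := by
          have := (List.nodup_append.1 ((List.nodup_append.1 hnodup).2.1)).2.2
          exact fun hc => this x hx x hc rfl
        have hagree : ∀ (b : Tm F V), (b ∈ p ∨ b ∈ q) → substG σ' b = substG σ b := by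
          intro b hb
          refine substG_congr b (fun y hy => hσ'y y (fun hyx => ?_))
          subst hyx
          rcases hb with hb | hb
          · exact hxp (List.mem_flatMap.2 ⟨b, hb, hy⟩)
          · exact hxq (List.mem_flatMap.2 ⟨b, hb, hy⟩)
        rw [substG_node, hts]
        simp only [List.map_append, List.map_cons]
        rw [List.map_congr_left (fun b hb => hagree b (Or.inl hb)),
          List.map_congr_left (fun b hb => hagree b (Or.inr hb)), hp, hq, ← hs0]
  termination_by l => sizeOf l
  decreasing_by
    have := List.sizeOf_lt_of_mem hats
    simp only [Tm.node.sizeOf_spec]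
    omega
end Lemmas4
section Lemmas5
variable {F V : Type}

theorem lift_reflgen {R : Set (Tm F V × Tm F V)} {a b : GTerm F}
    (h : Relation.ReflGen (Red R) a b) (f : F) (pre post : List (GTerm F)) :
    Relation.ReflGen (Red R) (GTerm.node f (pre ++ a :: post))
      (GTerm.node f (pre ++ b :: post)) := by
  cases h with
  | refl => exact .refl
  | single h => exact .single (Red.sub h)

theorem root_comm [DecidableEq V] {A B : Set (Tm F V × Tm F V)}
    (hAB : ¬ Overlap A B) (hlinA : ∀ p ∈ A, LinearRule p)
    {l r : Tm F V} {σ : V → GTerm F} {v : GTerm F}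
    (hmem : (l, r) ∈ A) (hv : Red B (substG σ l) v) :
    ∃ w, Relation.ReflGen (Red B) (substG σ r) w ∧ Red A v w := by
  obtain ⟨hll, hlr⟩ := hlinA _ hmem
  rcases peel l σ v hll hv with hov | ⟨x, s', σ', hx, hredx, hσ'x, hσ'y, hveq⟩
  · obtain ⟨u, hu, hnv, p₂, hp₂, σ₁, σ₂, he⟩ := hov
    exact absurd ⟨(l, r), hmem, p₂, hp₂, u, hu, hnv, σ₁, σ₂, he⟩ hAB
  · refine ⟨substG σ' r, ?_, ?_⟩
    · have hc : (varOccs r).count x ≤ 1 := List.nodup_iff_count_le_one.1 hlr x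
      rcases ctx_step (hσ'x ▸ hredx) hσ'y r hc with heq | hred
      · rw [heq]
      · exact Relation.ReflGen.single hred
    · rw [hveq]; exact Red.root σ' hmem

theorem scomm [DecidableEq V] {A B : Set (Tm F V × Tm F V)}
    (hlinA : ∀ p ∈ A, LinearRule p) (hlinB : ∀ p ∈ B, LinearRule p)
    (hAB : ¬ Overlap A B) (hBA : ¬ Overlap B A) :
    ∀ {t u v : GTerm F}, Red A t u → Red B t v →
    ∃ w, Relation.ReflGen (Red B) u w ∧ Relation.ReflGen (Red A) v w := by
  intro t u v h1
  induction h1 generalizing v with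
  | root σ hmem =>
    intro h2
    obtain ⟨w, h3, h4⟩ := root_comm hAB hlinA hmem h2
    exact ⟨w, h3, .single h4⟩
  | @sub f pre post s s1 hred ih =>
    intro h2
    generalize hg : GTerm.node f (pre ++ s :: post) = g at h2
    cases h2 with
    | root τ hmem₂ =>
      rename_i l₂ r₂
      have hv : Red A (substG τ l₂) (GTerm.node f (pre ++ s1 :: post)) := by
        rw [← hg]; exact Red.sub hred
      obtain ⟨w, hw1, hw2⟩ := root_comm hBA hlinB hmem₂ hv
      exact ⟨w, .single hw2, hw1⟩
    | sub hred₂ =>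
      rename_i f' pre₂ post₂ s₂ v₂
      injection hg with hf hl
      subst hf
      rcases List.append_eq_append_iff.1 hl with ⟨mid, hpre₂, hrest⟩ | ⟨mid, hpre, hrest⟩
      · cases mid with
        | nil =>
          simp only [List.nil_append, List.append_nil] at hpre₂ hrest
          injection hrest with hs hpost
          subst hpre₂ hs hpost
          obtain ⟨w0, hB, hA⟩ := ih hred₂
          exact ⟨_, lift_reflgen hB _ _ _, lift_reflgen hA _ _ _⟩
        | cons c mid' =>
          injection hrest with hs hpost
          subst hs hpre₂ hpost
          refine ⟨GTerm.node f (pre ++ s1 :: (mid' ++ v₂ :: post₂)), ?_, ?_⟩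
          · have : Red B (GTerm.node f ((pre ++ s1 :: mid') ++ s₂ :: post₂))
                (GTerm.node f ((pre ++ s1 :: mid') ++ v₂ :: post₂)) := Red.sub hred₂
            simpa using Relation.ReflGen.single this
          · have : Red A (GTerm.node f (pre ++ s :: (mid' ++ v₂ :: post₂)))
                (GTerm.node f (pre ++ s1 :: (mid' ++ v₂ :: post₂))) := Red.sub hred
            simpa using Relation.ReflGen.single this
      · cases mid with
        | nil =>
          simp only [List.nil_append, List.append_nil] at hpre hrest
          injection hrest with hs hpost
          subst hpre hs hpost
          obtain ⟨w0, hB, hA⟩ := ih hred₂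
          exact ⟨_, lift_reflgen hB _ _ _, lift_reflgen hA _ _ _⟩
        | cons c mid' =>
          injection hrest with hs hpost
          subst hs hpre hpost
          refine ⟨GTerm.node f (pre₂ ++ v₂ :: (mid' ++ s1 :: post)), ?_, ?_⟩
          · have : Red B (GTerm.node f (pre₂ ++ s₂ :: (mid' ++ s1 :: post)))
                (GTerm.node f (pre₂ ++ v₂ :: (mid' ++ s1 :: post))) := Red.sub hred₂
            simpa using Relation.ReflGen.single this
          · have : Red A (GTerm.node f ((pre₂ ++ v₂ :: mid') ++ s :: post))
                (GTerm.node f ((pre₂ ++ v₂ :: mid') ++ s1 :: post)) := Red.sub hred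
            simpa using Relation.ReflGen.single this
end Lemmas5
section Lemmas6
variable {F V : Type}

theorem scomm_strip [DecidableEq V] {A B : Set (Tm F V × Tm F V)}
    (hlinA : ∀ p ∈ A, LinearRule p) (hlinB : ∀ p ∈ B, LinearRule p)
    (hAB : ¬ Overlap A B) (hBA : ¬ Overlap B A) :
    ∀ {t u v : GTerm F}, Red A t u → Reds B t v →
    ∃ w, Reds B u w ∧ Relation.ReflGen (Red A) v w := by
  intro t u v h1 h2
  induction h2 with
  | refl => exact ⟨u, .refl, .single h1⟩
  | tail hsteps hstep ih =>
    obtain ⟨w', hw1, hw2⟩ := ih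
    cases hw2 with
    | refl => exact ⟨_, hw1.tail hstep, .refl⟩
    | single hA =>
      obtain ⟨w, hwB, hwA⟩ := scomm hlinA hlinB hAB hBA hA hstep
      exact ⟨w, hw1.trans hwB.to_reflTransGen, hwA⟩

theorem comm_reds [DecidableEq V] {A B : Set (Tm F V × Tm F V)}
    (hlinA : ∀ p ∈ A, LinearRule p) (hlinB : ∀ p ∈ B, LinearRule p)
    (hAB : ¬ Overlap A B) (hBA : ¬ Overlap B A) :
    ∀ {t u v : GTerm F}, Reds A t u → Reds B t v →
    ∃ w, Reds B u w ∧ Reds A v w := by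
  intro t u v h1
  induction h1 generalizing v with
  | refl => exact fun h2 => ⟨v, h2, .refl⟩
  | tail hsteps hstep ih =>
    intro h2
    obtain ⟨w', hw1, hw2⟩ := ih h2
    obtain ⟨w, hwB, hwA⟩ := scomm_strip hlinA hlinB hAB hBA hstep hw1
    exact ⟨w, hwB, hw2.trans hwA.to_reflTransGen⟩

theorem red_mono {R S : Set (Tm F V × Tm F V)} (h : R ⊆ S) {a b : GTerm F}
    (hr : Red R a b) : Red S a b := by
  induction hr with
  | root σ hm => exact Red.root σ (h hm)
  | sub _ ih => exact Red.sub ih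

theorem red_union_cases {R₁ R₂ : Set (Tm F V × Tm F V)} {a b : GTerm F}
    (hr : Red (R₁ ∪ R₂) a b) : Red R₁ a b ∨ Red R₂ a b := by
  induction hr with
  | root σ hm => rcases hm with hm | hm
                 · exact Or.inl (Red.root σ hm)
                 · exact Or.inr (Red.root σ hm)
  | sub _ ih => rcases ih with ih | ih
                · exact Or.inl (Red.sub ih)
                · exact Or.inr (Red.sub ih)
end Lemmas6

/-- the union of two linear (left- and right-linear) confluent
TRSs with no critical pairs between a rule of one and a rule of the other is
confluent. -/
theorem union_confluent_of_mutually_orthogonal {F V : Type}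
    (R₁ R₂ : Set (Tm F V × Tm F V))
    (hwf : ∀ p ∈ R₁ ∪ R₂, RuleWF p)
    (hlin : ∀ p ∈ R₁ ∪ R₂, LinearRule p)
    (hc₁ : Confluent R₁) (hc₂ : Confluent R₂)
    (h₁₂ : ¬ Overlap R₁ R₂) (h₂₁ : ¬ Overlap R₂ R₁) :
    Confluent (R₁ ∪ R₂) := by
  classical
  have hlin₁ : ∀ p ∈ R₁, LinearRule p := fun p hp => hlin p (Or.inl hp)
  have hlin₂ : ∀ p ∈ R₂, LinearRule p := fun p hp => hlin p (Or.inr hp)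
  have comm : ∀ {t u v : GTerm F}, Reds R₁ t u → Reds R₂ t v →
      ∃ w, Reds R₂ u w ∧ Reds R₁ v w := fun h1 h2 =>
    comm_reds hlin₁ hlin₂ h₁₂ h₂₁ h1 h2
  -- The composite relation `Reds R₁ ∘ Reds R₂` has the diamond property.
  set T : GTerm F → GTerm F → Prop := fun x y => ∃ z, Reds R₁ x z ∧ Reds R₂ z y with hT
  have hdia : ∀ a b c, T a b → T a c → ∃ d, T b d ∧ T c d := by
    rintro a b c ⟨x, hax, hxb⟩ ⟨y, hay, hyc⟩
    obtain ⟨z, hxz, hyz⟩ := hc₁ a x y hax hay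
    obtain ⟨b', hzb', hbb'⟩ := comm hxz hxb
    obtain ⟨c', hzc', hcc'⟩ := comm hyz hyc
    obtain ⟨d, hb'd, hc'd⟩ := hc₂ z b' c' hzb' hzc'
    exact ⟨d, ⟨b', hbb', hb'd⟩, ⟨c', hcc', hc'd⟩⟩
  -- `Reds (R₁ ∪ R₂)` coincides with `ReflTransGen T`.
  have hsub1 : ∀ {x y : GTerm F}, Reds (R₁ ∪ R₂) x y → Relation.ReflTransGen T x y := by
    intro x y h
    refine Relation.ReflTransGen.mono (fun a b hab => ?_) _ _ h
    rcases red_union_cases hab with h' | h'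
    · exact ⟨b, Relation.ReflTransGen.single h', .refl⟩
    · exact ⟨a, .refl, Relation.ReflTransGen.single h'⟩
  have hsub2 : ∀ {x y : GTerm F}, Relation.ReflTransGen T x y → Reds (R₁ ∪ R₂) x y := by
    intro x y h
    induction h with
    | refl => exact .refl
    | tail _ hstep ih =>
      obtain ⟨z, h1, h2⟩ := hstep
      refine ih.trans (Relation.ReflTransGen.trans (b := z) ?_ ?_)
      · exact Relation.ReflTransGen.mono (fun a b hab => red_mono Set.subset_union_left hab) _ _ h1
      · exact Relation.ReflTransGen.mono (fun a b hab => red_mono Set.subset_union_right hab) _ _ h2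
  intro a b c hab hac
  have hcr := Relation.church_rosser
    (fun a b c h1 h2 => by
      obtain ⟨d, hd1, hd2⟩ := hdia a b c h1 h2
      exact ⟨d, .single hd1, Relation.ReflTransGen.single hd2⟩)
    (hsub1 hab) (hsub1 hac)
  obtain ⟨d, hbd, hcd⟩ := hcr
  exact ⟨d, hsub2 hbd, hsub2 hcd⟩
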